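/- The unilateral weighted shift W with weights w_{2n} = 1 and w_{2n+1} = 1/(n+1) for all n ≥ 0 is not posinormal (since sup_n |wₙ/w_{n+1}| = ∞) and is not coposinormal (since e₀ ∈ ker W* but W e₀ ≠ 0), yet W is supraposinormal. -/

import Mathlib

open ContinuousLinearMap Complex
open scoped ENNReal NNReal

noncomputable section ShiftAux

local notation "H" => lp (fun _ : ℕ => ℂ) 2

local notation "⟪" x ", " y "⟫" => @inner ℂ _ _ x y

lemma sp_memlp_shift {f : ℕ → ℂ} (g : H) (k : ℕ)
    (h : ∀ n, ‖f n‖ ≤ ‖g (n + k)‖) : Memℓp f 2 := by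
  apply memℓp_gen
  have hg : Summable fun n => ‖g n‖ ^ (2 : ℝ≥0∞).toReal := (lp.memℓp g).summable (by norm_num)
  have hgi : Summable fun n => ‖g (n + k)‖ ^ (2 : ℝ≥0∞).toReal :=
    hg.comp_injective (add_left_injective k)
  refine hgi.of_nonneg_of_le (fun n => Real.rpow_nonneg (norm_nonneg _) _) fun n =>
    Real.rpow_le_rpow (norm_nonneg _) (h n) ENNReal.toReal_nonneg

lemma sp_norm_le_shift (x : H) (g : H) (k : ℕ) (h : ∀ n, ‖x n‖ ≤ ‖g (n + k)‖) :
    ‖x‖ ≤ ‖g‖ := by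
  have hp : (0:ℝ) < (2 : ℝ≥0∞).toReal := by norm_num
  rw [lp.norm_eq_tsum_rpow hp x, lp.norm_eq_tsum_rpow hp g]
  refine Real.rpow_le_rpow (tsum_nonneg fun n => Real.rpow_nonneg (norm_nonneg _) _) ?_
    (by positivity)
  refine Summable.tsum_le_tsum_of_inj (fun n => n + k) (add_left_injective k)
    (fun c _ => Real.rpow_nonneg (norm_nonneg _) _)
    (fun n => Real.rpow_le_rpow (norm_nonneg _) (h n) ENNReal.toReal_nonneg)
    ((lp.memℓp x).summable hp)
    ((lp.memℓp g).summable hp)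

/-- the operator `f ↦ fun n => d n * f (n + k)` for `d` bounded by 1. -/
def mulShift (d : ℕ → ℂ) (hd : ∀ n, ‖d n‖ ≤ 1) (k : ℕ) : H →L[ℂ] H :=
  LinearMap.mkContinuous
    { toFun := fun f => ⟨fun n => d n * f (n + k), sp_memlp_shift f k fun n => by
        calc ‖d n * f (n + k)‖ = ‖d n‖ * ‖f (n + k)‖ := norm_mul _ _
          _ ≤ 1 * ‖f (n + k)‖ := mul_le_mul_of_nonneg_right (hd n) (norm_nonneg _)
          _ = ‖f (n + k)‖ := one_mul _⟩
      map_add' := fun f g => by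
        apply lp.ext
        funext n
        simp [lp.coeFn_add, Pi.add_apply, mul_add]
        rfl
      map_smul' := fun c f => by
        apply lp.ext
        funext n
        simp [lp.coeFn_smul, Pi.smul_apply, smul_eq_mul]
        ring }
    1 (fun f => by
      rw [one_mul]
      exact sp_norm_le_shift _ f k fun n => by
        calc ‖d n * f (n + k)‖ = ‖d n‖ * ‖f (n + k)‖ := norm_mul _ _
          _ ≤ 1 * ‖f (n + k)‖ := mul_le_mul_of_nonneg_right (hd n) (norm_nonneg _)
          _ = ‖f (n + k)‖ := one_mul _)

@[simp] lemma mulShift_apply (d : ℕ → ℂ) (hd : ∀ n, ‖d n‖ ≤ 1) (k : ℕ) (f : H) (n : ℕ) :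
    (mulShift d hd k f) n = d n * f (n + k) := rfl


lemma mulShift_eq_adjoint (w : ℕ → ℂ) (hw : ∀ n, ‖w n‖ ≤ 1)
    (W : H →L[ℂ] H) (hW0 : ∀ f : H, W f 0 = 0)
    (hWs : ∀ f : H, ∀ n : ℕ, W f (n + 1) = w n * f n) :
    adjoint W = mulShift (fun n => (starRingEnd ℂ) (w n)) (fun n => by simpa using hw n) 1 := by
  have h : mulShift (fun n => (starRingEnd ℂ) (w n)) (fun n => by simpa using hw n) 1
      = adjoint W := by
    rw [ContinuousLinearMap.eq_adjoint_iff]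
    intro x y
    rw [lp.inner_eq_tsum, lp.inner_eq_tsum]
    have h0 : Function.support (fun m : ℕ => ⟪x m, W y m⟫) ⊆
        Set.range (fun n : ℕ => n + 1) := by
      intro m hm
      rcases m with _ | m
      · exact absurd (by simp [hW0, RCLike.inner_apply]) hm
      · exact ⟨m, rfl⟩
    rw [← Function.Injective.tsum_eq (add_left_injective 1) h0]
    congr 1
    funext n
    simp only [RCLike.inner_apply, mulShift_apply, map_mul, RingHomCompTriple.comp_apply,
      RingHom.id_apply, starRingEnd_self_apply, hWs]
    ring
  exact h.symm

/-- diagonal operator with real entries bounded by 1 -/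
def diagOp (r : ℕ → ℝ) (hr : ∀ n, |r n| ≤ 1) : H →L[ℂ] H :=
  mulShift (fun n => (r n : ℂ)) (fun n => by simpa using hr n) 0

@[simp] lemma diagOp_apply (r : ℕ → ℝ) (hr : ∀ n, |r n| ≤ 1) (f : H) (n : ℕ) :
    (diagOp r hr f) n = (r n : ℂ) * f n := rfl

lemma diagOp_isSelfAdjoint (r : ℕ → ℝ) (hr : ∀ n, |r n| ≤ 1) :
    IsSelfAdjoint (diagOp r hr) := by
  rw [ContinuousLinearMap.isSelfAdjoint_iff']
  have h : diagOp r hr = adjoint (diagOp r hr) := by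
    rw [ContinuousLinearMap.eq_adjoint_iff]
    intro x y
    rw [lp.inner_eq_tsum, lp.inner_eq_tsum]
    congr 1
    funext n
    simp only [RCLike.inner_apply, diagOp_apply, map_mul, Complex.conj_ofReal]
    ring
  exact h.symm

lemma diagOp_isPositive (r : ℕ → ℝ) (hr : ∀ n, |r n| ≤ 1) (h0 : ∀ n, 0 ≤ r n) :
    (diagOp r hr).IsPositive := by
  refine ⟨(diagOp_isSelfAdjoint r hr).isSymmetric, fun x => ?_⟩
  rw [ContinuousLinearMap.reApplyInnerSelf_apply, lp.inner_eq_tsum,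
    RCLike.re_tsum ℂ (lp.summable_inner _ _)]
  refine tsum_nonneg fun n => ?_
  have : ⟪(diagOp r hr x) n, x n⟫ = ((r n * Complex.normSq (x n) : ℝ) : ℂ) := by
    simp only [RCLike.inner_apply, diagOp_apply, map_mul, Complex.conj_ofReal]
    rw [mul_left_comm, Complex.mul_conj]
    push_cast
    ring
  rw [this]
  simp only [RCLike.ofReal_re]
  exact mul_nonneg (h0 n) (Complex.normSq_nonneg _)

lemma diagOp_denseRange (r : ℕ → ℝ) (hr : ∀ n, |r n| ≤ 1) (hpos : ∀ n, 0 < r n) :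
    DenseRange (diagOp r hr) := by
  intro f
  refine mem_closure_of_tendsto (lp.hasSum_single ENNReal.ofNat_ne_top f) ?_
  filter_upwards with s
  refine ⟨∑ i ∈ s, lp.single 2 i (((r i : ℂ))⁻¹ * f i), ?_⟩
  rw [map_sum]
  refine Finset.sum_congr rfl fun i _ => ?_
  apply lp.ext
  funext n
  rcases eq_or_ne n i with rfl | hne
  · have hrn : ((r n : ℂ)) ≠ 0 := by
      exact_mod_cast Complex.ofReal_ne_zero.mpr (hpos n).ne'
    show (r n : ℂ) * (lp.single 2 n ((r n : ℂ)⁻¹ * f n) : ℕ → ℂ) n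
        = (lp.single 2 n (f n) : ℕ → ℂ) n
    rw [lp.single_apply_self, lp.single_apply_self, mul_inv_cancel_left₀ hrn]
  · show (r n : ℂ) * (lp.single 2 i ((r i : ℂ)⁻¹ * f i) : ℕ → ℂ) n
        = (lp.single 2 i (f i) : ℕ → ℂ) n
    rw [lp.single_apply_ne _ _ _ hne, lp.single_apply_ne _ _ _ hne, mul_zero]

end ShiftAux

set_option maxHeartbeats 1000000

/-- The weighted shift with w_{2n} = 1, w_{2n+1} = 1/(n+1) is neither posinormal
nor coposinormal, yet it is supraposinormal. -/
theorem shift_supraposinormal_not_posinormal_not_coposinormal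
    (w : ℕ → ℂ)
    (hweven : ∀ n : ℕ, w (2 * n) = 1)
    (hwodd : ∀ n : ℕ, w (2 * n + 1) = 1 / ((n : ℂ) + 1))
    (W : lp (fun _ : ℕ => ℂ) 2 →L[ℂ] lp (fun _ : ℕ => ℂ) 2)
    (hW0 : ∀ f : lp (fun _ : ℕ => ℂ) 2, W f 0 = 0)
    (hWs : ∀ f : lp (fun _ : ℕ => ℂ) 2, ∀ n : ℕ, W f (n + 1) = w n * f n) :
    (¬ ∃ γ : ℝ, 0 ≤ γ ∧
        (((γ : ℂ) ^ 2) • (adjoint W ∘L W) - W ∘L adjoint W).IsPositive) ∧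
    (¬ ∃ γ : ℝ, 0 ≤ γ ∧
        (((γ : ℂ) ^ 2) • (W ∘L adjoint W) - adjoint W ∘L W).IsPositive) ∧
    (∃ Q P : lp (fun _ : ℕ => ℂ) 2 →L[ℂ] lp (fun _ : ℕ => ℂ) 2,
      Q.IsPositive ∧ P.IsPositive ∧ (DenseRange Q ∨ DenseRange P) ∧
      W ∘L Q ∘L adjoint W = adjoint W ∘L P ∘L W) := by
  classical
  have habs : ∀ m : ℕ, ‖((m : ℂ) + 1)‖ = (m : ℝ) + 1 := by
    intro m
    rw [show ((m : ℂ) + 1) = ((m + 1 : ℕ) : ℂ) by push_cast; ring, Complex.norm_natCast]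
    push_cast; ring
  have hwodd_norm : ∀ m : ℕ, ‖w (2 * m + 1)‖ = 1 / ((m : ℝ) + 1) := by
    intro m; rw [hwodd m, norm_div, norm_one, habs]
  have hwle : ∀ n : ℕ, ‖w n‖ ≤ 1 := by
    intro n
    rcases Nat.even_or_odd n with ⟨m, rfl⟩ | ⟨m, rfl⟩
    · rw [show m + m = 2 * m by ring, hweven]; simp
    · rw [hwodd_norm]
      rw [div_le_one (by positivity)]
      linarith [Nat.cast_nonneg (α := ℝ) m]
  have hwne : ∀ n : ℕ, w n ≠ 0 := by
    intro n
    rcases Nat.even_or_odd n with ⟨m, rfl⟩ | ⟨m, rfl⟩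
    · rw [show m + m = 2 * m by ring, hweven]; exact one_ne_zero
    · rw [hwodd]; exact one_div_ne_zero (Nat.cast_add_one_ne_zero m)
  have hS : adjoint W
      = mulShift (fun n => (starRingEnd ℂ) (w n)) (fun n => by simpa using hwle n) 1 :=
    mulShift_eq_adjoint w hwle W hW0 hWs
  set S : lp (fun _ : ℕ => ℂ) 2 →L[ℂ] lp (fun _ : ℕ => ℂ) 2 :=
    mulShift (fun n => (starRingEnd ℂ) (w n)) (fun n => by simpa using hwle n) 1 with hSdef
  -- basis vector facts
  have hsing : ∀ (j n : ℕ), (lp.single 2 j (1:ℂ) : ℕ → ℂ) n = if n = j then 1 else 0 := by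
    intro j n
    rcases eq_or_ne n j with rfl | h
    · rw [lp.single_apply_self, if_pos rfl]
    · rw [lp.single_apply_ne _ _ _ h, if_neg h]
  have hsmul : ∀ (j : ℕ) (c : ℂ) (n : ℕ),
      ((c • lp.single 2 j (1:ℂ) : lp (fun _ : ℕ => ℂ) 2) : ℕ → ℂ) n
        = if n = j then c else 0 := by
    intro j c n
    rw [lp.coeFn_smul, Pi.smul_apply, smul_eq_mul, hsing]
    rcases eq_or_ne n j with rfl | h
    · rw [if_pos rfl, if_pos rfl, mul_one]
    · rw [if_neg h, if_neg h, mul_zero]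
  have henorm : ∀ k : ℕ, ‖(lp.single 2 k (1:ℂ) : lp (fun _ : ℕ => ℂ) 2)‖ = 1 := by
    intro k
    have := lp.norm_single (E := fun _ : ℕ => ℂ) (p := (2:ℝ≥0∞))
      (by norm_num : (0:ℝ≥0∞) < 2) k (1 : ℂ)
    simpa using this
  have hWe : ∀ k : ℕ, W (lp.single 2 k (1:ℂ)) = w k • lp.single 2 (k+1) (1:ℂ) := by
    intro k
    apply lp.ext
    funext n
    rcases n with _ | n
    · rw [hW0, hsmul]
      rw [if_neg (by omega)]
    · rw [hWs, hsmul, hsing]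
      rcases eq_or_ne n k with rfl | h
      · rw [if_pos rfl, if_pos rfl, mul_one]
      · rw [if_neg h, if_neg (by omega), mul_zero]
  have hSe : ∀ k : ℕ, S (lp.single 2 (k+1) (1:ℂ))
      = (starRingEnd ℂ) (w k) • lp.single 2 k (1:ℂ) := by
    intro k
    apply lp.ext
    funext n
    rw [show (S (lp.single 2 (k+1) (1:ℂ)) : ℕ → ℂ) n
        = (starRingEnd ℂ) (w n) * (lp.single 2 (k+1) (1:ℂ) : ℕ → ℂ) (n+1) from rfl,
      hsing, hsmul]
    rcases eq_or_ne n k with rfl | h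
    · rw [if_pos rfl, if_pos rfl, mul_one]
    · rw [if_neg (by omega), if_neg h, mul_zero]
  have hSe0 : S (lp.single 2 0 (1:ℂ)) = 0 := by
    apply lp.ext
    funext n
    rw [show (S (lp.single 2 0 (1:ℂ)) : ℕ → ℂ) n
        = (starRingEnd ℂ) (w n) * (lp.single 2 0 (1:ℂ) : ℕ → ℂ) (n+1) from rfl,
      hsing, if_neg (by omega), mul_zero, lp.coeFn_zero, Pi.zero_apply]
  -- expansion of the positivity quantity
  have hconj : ∀ γ : ℝ, (starRingEnd ℂ) ((γ:ℂ)^2) = (((γ^2 : ℝ)) : ℂ) := by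
    intro γ
    rw [← Complex.ofReal_pow, Complex.conj_ofReal]
  have hq1 : ∀ (A : lp (fun _ : ℕ => ℂ) 2 →L[ℂ] lp (fun _ : ℕ => ℂ) 2) (x),
      (inner ℂ ((adjoint A ∘L A) x) x : ℂ) = (((‖A x‖^2 : ℝ)) : ℂ) := by
    intro A x
    rw [ContinuousLinearMap.comp_apply, ContinuousLinearMap.adjoint_inner_left,
      inner_self_eq_norm_sq_to_K]
    norm_cast
  have hq2 : ∀ (A : lp (fun _ : ℕ => ℂ) 2 →L[ℂ] lp (fun _ : ℕ => ℂ) 2) (x),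
      (inner ℂ ((A ∘L adjoint A) x) x : ℂ) = (((‖adjoint A x‖^2 : ℝ)) : ℂ) := by
    intro A x
    calc (inner ℂ ((A ∘L adjoint A) x) x : ℂ)
        = inner ℂ ((adjoint (adjoint A)) (adjoint A x)) x := by rw [adjoint_adjoint]; rfl
      _ = inner ℂ (adjoint A x) (adjoint A x) := ContinuousLinearMap.adjoint_inner_left _ _ _
      _ = (((‖adjoint A x‖^2 : ℝ)) : ℂ) := by
          rw [inner_self_eq_norm_sq_to_K]; norm_cast
  have expand1 : ∀ (γ : ℝ) (x : lp (fun _ : ℕ => ℂ) 2),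
      (((γ : ℂ) ^ 2) • (adjoint W ∘L W) - W ∘L adjoint W).reApplyInnerSelf x
        = γ^2 * ‖W x‖^2 - ‖adjoint W x‖^2 := by
    intro γ x
    rw [ContinuousLinearMap.reApplyInnerSelf_apply, ContinuousLinearMap.sub_apply,
      ContinuousLinearMap.smul_apply, inner_sub_left, inner_smul_left, hconj, hq1, hq2]
    rw [← Complex.ofReal_mul, ← Complex.ofReal_sub]
    exact RCLike.ofReal_re _
  have expand2 : ∀ (γ : ℝ) (x : lp (fun _ : ℕ => ℂ) 2),
      (((γ : ℂ) ^ 2) • (W ∘L adjoint W) - adjoint W ∘L W).reApplyInnerSelf x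
        = γ^2 * ‖adjoint W x‖^2 - ‖W x‖^2 := by
    intro γ x
    rw [ContinuousLinearMap.reApplyInnerSelf_apply, ContinuousLinearMap.sub_apply,
      ContinuousLinearMap.smul_apply, inner_sub_left, inner_smul_left, hconj, hq1, hq2]
    rw [← Complex.ofReal_mul, ← Complex.ofReal_sub]
    exact RCLike.ofReal_re _
  refine ⟨?_, ?_, ?_⟩
  · -- not posinormal
    rintro ⟨γ, hγ, hpos⟩
    obtain ⟨m, hm⟩ := exists_nat_gt (γ^2)
    have h := hpos.2 (lp.single 2 (2*m+1) (1:ℂ))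
    rw [expand1] at h
    have hWx : ‖W (lp.single 2 (2*m+1) (1:ℂ))‖ = 1/((m:ℝ)+1) := by
      rw [hWe, norm_smul, henorm, mul_one, hwodd_norm]
    have hW'x : ‖adjoint W (lp.single 2 (2*m+1) (1:ℂ))‖ = 1 := by
      rw [hS]
      rw [show (2*m+1) = (2*m)+1 from rfl, hSe (2*m), norm_smul, henorm, mul_one,
        RCLike.norm_conj, hweven]
      norm_num
    rw [hWx, hW'x] at h
    have ha : (0:ℝ) < (m:ℝ)+1 := by positivity
    have e1 : γ^2 * (1/((m:ℝ)+1))^2 = γ^2 / ((m:ℝ)+1)^2 := by field_simp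
    have e2 : (1:ℝ) ≤ γ^2 / ((m:ℝ)+1)^2 := by nlinarith [h]
    have e3 : ((m:ℝ)+1)^2 ≤ γ^2 := (one_le_div (by positivity)).mp e2
    nlinarith [e3, hm, Nat.cast_nonneg (α := ℝ) m]
  · -- not coposinormal
    rintro ⟨γ, hγ, hpos⟩
    have h := hpos.2 (lp.single 2 0 (1:ℂ))
    rw [expand2] at h
    have h1 : ‖adjoint W (lp.single 2 0 (1:ℂ))‖ = 0 := by
      rw [hS, hSe0, norm_zero]
    have h2 : ‖W (lp.single 2 0 (1:ℂ))‖ = 1 := by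
      rw [hWe, norm_smul, henorm, mul_one, show w 0 = 1 from hweven 0]
      norm_num
    rw [h1, h2] at h
    nlinarith [h]
  · -- supraposinormal
    have hns : ∀ k, Complex.normSq (w k) ≤ 1 := by
      intro k
      have hh : Complex.normSq (w k) = ‖w k‖^2 := by
        rw [Complex.normSq_eq_norm_sq]
      nlinarith [hwle k, norm_nonneg (w k), hh]
    have hqb : ∀ n : ℕ, |Complex.normSq (w (n+1))| ≤ 1 := fun n => by
      rw [_root_.abs_of_nonneg (Complex.normSq_nonneg _)]; exact hns _
    have hpb : ∀ n : ℕ, |(if 2 ≤ n then Complex.normSq (w (n-2)) else 0 : ℝ)| ≤ 1 := by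
      intro n
      split_ifs with hc
      · rw [_root_.abs_of_nonneg (Complex.normSq_nonneg _)]; exact hns _
      · norm_num
    refine ⟨diagOp (fun n => Complex.normSq (w (n+1))) hqb,
      diagOp (fun n => if 2 ≤ n then Complex.normSq (w (n-2)) else 0) hpb,
      diagOp_isPositive _ _ (fun n => Complex.normSq_nonneg _),
      diagOp_isPositive _ _ (fun n => by
        by_cases hc : 2 ≤ n
        · simpa [hc] using Complex.normSq_nonneg (w (n-2))
        · simp [hc]),
      Or.inl (diagOp_denseRange _ _ (fun n => Complex.normSq_pos.mpr (hwne _))), ?_⟩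
    rw [hS]
    apply ContinuousLinearMap.ext
    intro f
    apply lp.ext
    funext n
    simp only [ContinuousLinearMap.comp_apply]
    rcases n with _ | n
    · rw [hW0]
      rw [show ((S ((diagOp _ hpb) (W f))) : ℕ → ℂ) 0
          = (starRingEnd ℂ) (w 0) * ((diagOp _ hpb (W f)) : ℕ → ℂ) (0+1) from rfl,
        diagOp_apply]
      rw [if_neg (by omega)]
      push_cast
      ring
    · rw [hWs, diagOp_apply]
      rw [show ((S ((diagOp _ hpb) (W f))) : ℕ → ℂ) (n+1)
          = (starRingEnd ℂ) (w (n+1)) * ((diagOp _ hpb (W f)) : ℕ → ℂ) (n+2) from rfl,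
        diagOp_apply, if_pos (by omega), show n+2-2 = n from rfl, hWs]
      rw [show ((S f) : ℕ → ℂ) n = (starRingEnd ℂ) (w n) * (f : ℕ → ℂ) (n+1) from rfl]
      rw [show (Complex.normSq (w (n+1)) : ℂ) = (starRingEnd ℂ) (w (n+1)) * w (n+1) by
          rw [mul_comm, Complex.mul_conj],
        show (Complex.normSq (w n) : ℂ) = w n * (starRingEnd ℂ) (w n) from
          (Complex.mul_conj _).symm]
      ring
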